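/- Let k ≥ 0 and n ≥ 1 be integers and let α be an integer with α^n ≡ 1 (mod n). If at least one of the following holds: (a) k+1 is neither 4 nor a prime; (b) k+1 = 4 and 4 ∤ n; (c) k+1 is a prime q and either q ∤ n or α ≢ 1 (mod q); then Σ_{i=k}^{n-1} i^(k̲) · α^(i-k) ≡ 0 (mod n). -/

import Mathlib

open Finset Nat

-- product of distinct numbers in [1,N] divides N!
lemma prod_dvd_factorial {s : Finset ℕ} {N : ℕ} (h : ∀ x ∈ s, x ∈ Finset.Icc 1 N) :
    (∏ x ∈ s, x) ∣ N ! := by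
  rw [← Finset.prod_Ico_id_eq_factorial]
  exact Finset.prod_dvd_prod_of_subset s (Finset.Ico 1 (N+1)) id (fun x hx => by
    have := h x hx
    simp only [Finset.mem_Icc] at this
    simp only [Finset.mem_Ico]
    omega)

lemma pow_dvd_factorial_of_mul_le {p t N : ℕ} (hp : 0 < p) (h : p * t ≤ N) :
    p ^ t ∣ N ! := by
  have key : (∏ x ∈ (Finset.Icc 1 t).image (· * p), x) ∣ N ! := by
    apply prod_dvd_factorial
    intro x hx
    simp only [Finset.mem_image, Finset.mem_Icc] at hx
    obtain ⟨i, ⟨h1, h2⟩, rfl⟩ := hx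
    simp only [Finset.mem_Icc]
    constructor
    · exact Nat.one_le_iff_ne_zero.mpr (by positivity)
    · calc i * p ≤ t * p := Nat.mul_le_mul_right p h2
        _ = p * t := Nat.mul_comm t p
        _ ≤ N := h
  have him : (∏ x ∈ (Finset.Icc 1 t).image (· * p), x)
      = (∏ i ∈ Finset.Icc 1 t, i) * p ^ t := by
    rw [Finset.prod_image (by intro a _ b _ hab; exact Nat.eq_of_mul_eq_mul_right hp hab)]
    rw [Finset.prod_mul_distrib, Finset.prod_const, Nat.card_Icc]
    simp
  rw [him] at key
  exact dvd_trans (Dvd.intro_left _ rfl) key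

-- v_p(m!) ≤ m - 1 for m ≥ 1
lemma factorization_factorial_add_one_le {p : ℕ} (hp : p.Prime) :
    ∀ m : ℕ, 1 ≤ m → (m !).factorization p + 1 ≤ m := by
  intro m
  induction m using Nat.strong_induction_on with
  | _ m ih =>
    intro hm
    haveI : Fact p.Prime := ⟨hp⟩
    have h2 : 2 ≤ p := hp.two_le
    set q := m / p with hq
    have hval : (m !).factorization p = (q !).factorization p + q := by
      rw [Nat.factorization_def _ hp, Nat.factorization_def _ hp]
      rw [← padicValNat_mul_div_factorial (p := p) m, padicValNat_factorial_mul]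
    rcases Nat.eq_zero_or_pos q with h0 | hqpos
    · rw [hval, h0]
      simp only [Nat.factorial_zero]
      simpa using hm
    · have hqm : q < m := Nat.div_lt_self (by omega) (by omega)
      have := ih q hqm hqpos
      have hpq : p * q ≤ m := by
        have := Nat.div_mul_le_self m p
        calc p * q = m / p * p := Nat.mul_comm _ _
          _ ≤ m := this
      have : 2 * q ≤ m := le_trans (by omega) (le_trans (Nat.mul_le_mul_right q h2) hpq)
      omega

lemma lt_two_pow_pred : ∀ a : ℕ, 3 ≤ a → a < 2 ^ (a - 1) := by
  intro a
  induction a with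
  | zero => omega
  | succ a ih =>
    intro ha
    rcases Nat.lt_or_ge a 3 with h | h
    · interval_cases a <;> simp_all <;> decide
    · have := ih (by omega)
      have h2 : a + 1 - 1 = (a - 1) + 1 := by omega
      rw [h2, pow_succ]
      omega

-- key arithmetic lemma (case a)
lemma pow_factorization_succ_dvd_factorial {p k : ℕ} (hp : p.Prime)
    (h4 : k + 1 ≠ 4) (hnp : ¬ (k+1).Prime) :
    p ^ ((k+1).factorization p) ∣ k ! := by
  set a := (k+1).factorization p with ha
  rcases Nat.eq_zero_or_pos a with h0 | hapos
  · simp [h0]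
  have h2 : 2 ≤ p := hp.two_le
  -- it suffices that p * a ≤ k
  apply pow_dvd_factorial_of_mul_le (by omega)
  have hpa : p ^ a ∣ k + 1 := Nat.ordProj_dvd _ _
  have hpa_le : p ^ a ≤ k + 1 := Nat.le_of_dvd (by omega) hpa
  have hha : a ≤ p ^ (a - 1) := by
    have := Nat.lt_pow_self (n := a - 1) (show 1 < p by omega)
    omega
  have hpow : p * p ^ (a - 1) = p ^ a := by
    conv_rhs => rw [show a = (a-1)+1 by omega]
    ring
  -- show p * a < k + 1
  suffices hlt : p * a < k + 1 by omega
  rcases Nat.lt_or_ge (p ^ a) (k + 1) with hb | hb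
  · -- b ≥ 2 case: p^a < k+1
    calc p * a ≤ p * p ^ (a-1) := Nat.mul_le_mul_left p hha
      _ = p ^ a := hpow
      _ < k + 1 := hb
  · -- b = 1: k + 1 = p ^ a
    have hkp : k + 1 = p ^ a := le_antisymm hb hpa_le
    have hane : a ≠ 1 := by
      intro h1
      rw [h1, pow_one] at hkp
      exact hnp (hkp ▸ hp)
    have ha2 : 2 ≤ a := by omega
    rcases Nat.eq_or_lt_of_le ha2 with h2a | h3a
    · -- a = 2, so p ≠ 2
      have hp2 : p ≠ 2 := by
        intro hpe
        rw [← h2a, hpe] at hkp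
        exact h4 (by omega)
      have hp3 : 3 ≤ p := by omega
      rw [hkp, ← h2a]
      have : p * 2 < p * p := by nlinarith
      calc p * 2 < p * p := this
        _ = p ^ 2 := (sq p).symm
    · -- a ≥ 3
      have h3 : 3 ≤ a := h3a
      have := lt_two_pow_pred a h3
      have h2p : (2:ℕ) ^ (a-1) ≤ p ^ (a-1) := Nat.pow_le_pow_left (by omega) _
      rw [hkp]
      calc p * a < p * 2 ^ (a-1) := by nlinarith
        _ ≤ p * p ^ (a-1) := Nat.mul_le_mul_left p h2p
        _ = p ^ a := hpow

lemma choose_mul_descFactorial' (n k m : ℕ) :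
    n.choose (k + m) * (k + m).descFactorial k = n.descFactorial k * (n - k).choose m := by
  rcases Nat.lt_or_ge n k with hnk | hnk
  · -- n < k : both sides zero
    rw [Nat.descFactorial_eq_zero_iff_lt.mpr hnk]
    rw [Nat.choose_eq_zero_of_lt (by omega)]
    simp
  rcases Nat.lt_or_ge n (k + m) with hlt | hge
  · -- k ≤ n < k + m : both sides zero
    rw [Nat.choose_eq_zero_of_lt hlt, Nat.choose_eq_zero_of_lt (by omega)]
    simp
  · -- k + m ≤ n
    rw [Nat.descFactorial_eq_factorial_mul_choose (k+m) k,
        Nat.descFactorial_eq_factorial_mul_choose n k]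
    have hre : n.choose (k+m) * (Nat.factorial k * (k+m).choose k)
        = n.choose (k+m) * (k+m).choose k * Nat.factorial k := by ring
    rw [hre, Nat.choose_mul (n := n) (Nat.le_add_right k m)]
    simp only [Nat.add_sub_cancel_left]
    ring

lemma sum_choose_descFactorial (n k : ℕ) (β : ℤ) :
    ∑ j ∈ range (n+1), (n.choose j : ℤ) * (j.descFactorial k : ℤ) * β ^ (j - k)
      = (n.descFactorial k : ℤ) * (1 + β) ^ (n - k) := by
  rcases Nat.lt_or_ge n k with hnk | hnk
  · rw [Nat.descFactorial_eq_zero_iff_lt.mpr hnk]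
    push_cast
    rw [zero_mul]
    apply Finset.sum_eq_zero
    intro j hj
    simp only [Finset.mem_range] at hj
    rw [Nat.descFactorial_eq_zero_iff_lt.mpr (by omega)]
    push_cast
    ring
  · have hsub : ∑ j ∈ range (n+1), (n.choose j : ℤ) * (j.descFactorial k : ℤ) * β ^ (j - k)
        = ∑ j ∈ Finset.Ico k (n+1), (n.choose j : ℤ) * (j.descFactorial k : ℤ) * β ^ (j - k) := by
      rw [Finset.range_eq_Ico]
      apply (Finset.sum_subset (Finset.Ico_subset_Ico (Nat.zero_le k) (le_refl (n+1))) _).symm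
      intro x _ hx2
      simp only [Finset.mem_Ico] at *
      rw [Nat.descFactorial_eq_zero_iff_lt.mpr (by omega)]
      push_cast
      ring
    rw [hsub, Finset.sum_Ico_eq_sum_range]
    have hlen : n + 1 - k = (n - k) + 1 := by omega
    rw [hlen]
    have hterm : ∀ m, (n.choose (k + m) : ℤ) * ((k + m).descFactorial k : ℤ) * β ^ (k + m - k)
        = (n.descFactorial k : ℤ) * (((n-k).choose m : ℤ) * β ^ m) := by
      intro m
      have := choose_mul_descFactorial' n k m
      have hcast : (n.choose (k + m) : ℤ) * ((k + m).descFactorial k : ℤ)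
          = (n.descFactorial k : ℤ) * ((n - k).choose m : ℤ) := by exact_mod_cast congrArg Nat.cast this
      rw [Nat.add_sub_cancel_left]
      calc (n.choose (k + m) : ℤ) * ((k + m).descFactorial k : ℤ) * β ^ m
          = (n.descFactorial k : ℤ) * ((n - k).choose m : ℤ) * β ^ m := by rw [hcast]
        _ = _ := by ring
    rw [Finset.sum_congr rfl (fun m _ => hterm m), ← Finset.mul_sum]
    congr 1
    rw [add_comm (1:ℤ) β, add_pow]
    apply Finset.sum_congr rfl
    intro m hm
    simp only [one_pow, mul_one]
    ring

lemma closed_form (k : ℕ) (β : ℤ) : ∀ n : ℕ,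
    ∑ i ∈ range n, (i.descFactorial k : ℤ) * (1 + β) ^ (i - k)
      = ∑ j ∈ range n, (n.choose (j+1) : ℤ) * (j.descFactorial k : ℤ) * β ^ (j - k) := by
  intro n
  induction n with
  | zero => simp
  | succ n ih =>
    rw [Finset.sum_range_succ, ih]
    have hsplit : ∀ j, ((n+1).choose (j+1) : ℤ) * (j.descFactorial k : ℤ) * β ^ (j - k)
        = (n.choose j : ℤ) * (j.descFactorial k : ℤ) * β ^ (j - k)
          + (n.choose (j+1) : ℤ) * (j.descFactorial k : ℤ) * β ^ (j - k) := by
      intro j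
      rw [Nat.choose_succ_succ]
      push_cast
      ring
    rw [Finset.sum_congr rfl (fun j _ => hsplit j), Finset.sum_add_distrib]
    rw [sum_choose_descFactorial n k β]
    have htop : ∑ j ∈ range (n+1), (n.choose (j+1) : ℤ) * (j.descFactorial k : ℤ) * β ^ (j - k)
        = ∑ j ∈ range n, (n.choose (j+1) : ℤ) * (j.descFactorial k : ℤ) * β ^ (j - k) := by
      rw [Finset.sum_range_succ, Nat.choose_succ_self]
      push_cast
      ring
    rw [htop]
    ring

lemma rec_identity (α : ℤ) (k : ℕ) : ∀ N : ℕ,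
    (α - 1) * ∑ m ∈ range N, ((m + (k+1)).descFactorial (k+1) : ℤ) * α ^ m
      + ((k:ℤ)+1) * ∑ m ∈ range (N+1), ((m + k).descFactorial k : ℤ) * α ^ m
    = ((N + (k+1)).descFactorial (k+1) : ℤ) * α ^ N := by
  intro N
  induction N with
  | zero =>
    simp only [Finset.range_zero, Finset.sum_empty, mul_zero, zero_add, Finset.range_one,
      Finset.sum_singleton, pow_zero, mul_one, Nat.zero_add]
    rw [Nat.descFactorial_self, Nat.descFactorial_self, Nat.factorial_succ]
    push_cast
    ring
  | succ N ih =>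
    rw [Finset.sum_range_succ, Finset.sum_range_succ (n := N+1)]
    have e1 : (N + 1 + (k+1)).descFactorial (k+1) = (N+1+k+1) * ((N + k + 1).descFactorial k) := by
      have := Nat.succ_descFactorial_succ (N+k+1) k
      convert this using 2 <;> omega
    have e2 : (N + (k+1)).descFactorial (k+1) = (N+1) * ((N + k + 1).descFactorial k) := by
      have := Nat.descFactorial_succ (N+k+1) k
      rw [show N + (k+1) = N + k + 1 by omega, this, show N + k + 1 - k = N + 1 by omega]
    have e3 : (N + 1 + k).descFactorial k = (N + k + 1).descFactorial k := by
      congr 1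
      omega
    rw [e1, e2, e3]
    have ihe : (α - 1) * ∑ m ∈ range N, ((m + (k+1)).descFactorial (k+1) : ℤ) * α ^ m
        = ((N + (k+1)).descFactorial (k+1) : ℤ) * α ^ N
          - ((k:ℤ)+1) * ∑ m ∈ range (N+1), ((m + k).descFactorial k : ℤ) * α ^ m := by
      rw [← ih]; ring
    rw [mul_add, ihe, e2]
    push_cast
    ring

lemma chain (n : ℕ) (hn : 1 ≤ n) (α : ℤ) (hα : (n:ℤ) ∣ α ^ n - 1) :
    ∀ k : ℕ, (n:ℤ) ∣ (α - 1) ^ (k+1)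
      * ∑ i ∈ Finset.Ico k n, (i.descFactorial k : ℤ) * α ^ (i - k) := by
  intro k
  induction k with
  | zero =>
    have hs : ∑ i ∈ Finset.Ico 0 n, ((i.descFactorial 0 : ℕ) : ℤ) * α ^ (i - 0)
        = ∑ i ∈ range n, α ^ i := by
      rw [Finset.range_eq_Ico]
      apply Finset.sum_congr rfl
      intro i _
      simp [Nat.descFactorial_zero]
    rw [pow_one, hs, mul_comm, geom_sum_mul]
    exact hα
  | succ k ih =>
    rcases le_or_gt n (k+1) with hle | hlt
    · rw [Finset.Ico_eq_empty (not_lt.mpr hle)]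
      simp
    · set N := n - (k+1) with hNdef
      have hs1 : ∑ i ∈ Finset.Ico (k+1) n, ((i.descFactorial (k+1)):ℤ) * α ^ (i - (k+1))
          = ∑ m ∈ range N, ((m + (k+1)).descFactorial (k+1) : ℤ) * α ^ m := by
        rw [Finset.sum_Ico_eq_sum_range]
        apply Finset.sum_congr rfl
        intro m _
        rw [show k+1+m = m+(k+1) by omega, Nat.add_sub_cancel]
      have hs0 : ∑ i ∈ Finset.Ico k n, ((i.descFactorial k):ℤ) * α ^ (i - k)
          = ∑ m ∈ range (N+1), ((m + k).descFactorial k : ℤ) * α ^ m := by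
        rw [Finset.sum_Ico_eq_sum_range, show n - k = N + 1 by omega]
        apply Finset.sum_congr rfl
        intro m _
        rw [show k+m = m+k by omega, Nat.add_sub_cancel]
      have hrec := rec_identity α k N
      have hdvd1 : (n:ℤ) ∣ ((N + (k+1)).descFactorial (k+1) : ℤ) := by
        rw [show N + (k+1) = n by omega]
        have hd : n.descFactorial (k+1) = n * ((n-1).descFactorial k) := by
          conv_lhs => rw [show n = (n-1)+1 by omega]
          rw [Nat.succ_descFactorial_succ, show n - 1 + 1 = n by omega]
        rw [hd]
        push_cast
        exact Dvd.intro _ rfl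
      rw [hs1]
      have hexp : (α - 1) ^ (k+1+1) * ∑ m ∈ range N, ((m + (k+1)).descFactorial (k+1) : ℤ) * α ^ m
          = (α-1)^(k+1) * (((N + (k+1)).descFactorial (k+1) : ℤ) * α ^ N)
            - ((k:ℤ)+1) * ((α-1)^(k+1) * ∑ m ∈ range (N+1), ((m + k).descFactorial k : ℤ) * α ^ m) := by
        have h1 : (α - 1) * ∑ m ∈ range N, ((m + (k+1)).descFactorial (k+1) : ℤ) * α ^ m
            = ((N + (k+1)).descFactorial (k+1) : ℤ) * α ^ N
              - ((k:ℤ)+1) * ∑ m ∈ range (N+1), ((m + k).descFactorial k : ℤ) * α ^ m := by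
          rw [← hrec]; ring
        calc (α - 1) ^ (k+1+1) * ∑ m ∈ range N, ((m + (k+1)).descFactorial (k+1) : ℤ) * α ^ m
            = (α-1)^(k+1) * ((α - 1) * ∑ m ∈ range N, ((m + (k+1)).descFactorial (k+1) : ℤ) * α ^ m) := by ring
          _ = _ := by rw [h1]; ring
      rw [hexp]
      apply _root_.dvd_sub
      · exact Dvd.dvd.mul_left (Dvd.dvd.mul_right hdvd1 _) _
      · rw [← hs0]
        exact Dvd.dvd.mul_left ih _

lemma key2 (k n : ℕ) (p : ℕ) (hp : p.Prime) (hn : 1 ≤ n) (β : ℤ)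
    (hβ : (p:ℤ) ∣ β)
    (hk : k + 1 ≤ n → p ^ (n.factorization p) ∣ n.choose (k+1) * Nat.factorial k) :
    (p:ℤ) ^ (n.factorization p)
      ∣ ∑ j ∈ range n, (n.choose (j+1) : ℤ) * (j.descFactorial k : ℤ) * β ^ (j - k) := by
  set e := n.factorization p with he
  apply Finset.dvd_sum
  intro j hj
  simp only [Finset.mem_range] at hj
  rcases Nat.lt_trichotomy j k with hjk | hjk | hjk
  · rw [Nat.descFactorial_eq_zero_iff_lt.mpr hjk]
    push_cast
    simp
  · -- j = k
    have hterm := hk (by omega)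
    rw [hjk, Nat.descFactorial_self, Nat.sub_self, pow_zero, mul_one]
    have hcast : ((p:ℤ))^e ∣ ((n.choose (k+1) * Nat.factorial k : ℕ) : ℤ) := by
      exact_mod_cast Int.natCast_dvd_natCast.mpr hterm
    push_cast at hcast ⊢
    exact hcast
  · -- j > k
    set m := j - k with hm
    have hm1 : 1 ≤ m := by omega
    obtain ⟨γ, hγ⟩ := hβ
    have hCne : n.choose (j+1) ≠ 0 := (Nat.choose_pos (by omega)).ne'
    have hdne : j.descFactorial k ≠ 0 := by
      rw [Ne, Nat.descFactorial_eq_zero_iff_lt]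
      omega
    set t := (j+1).factorization p with ht
    have h1 : e ≤ t + (n.choose (j+1)).factorization p := by
      have hid := Nat.add_one_mul_choose_eq (n-1) j
      rw [show n - 1 + 1 = n by omega] at hid
      have hd : (n : ℕ) ∣ (j+1) * n.choose (j+1) := by
        refine ⟨Nat.choose (n-1) j, ?_⟩
        rw [Nat.mul_comm (j+1) (n.choose (j+1))]
        rw [show n.choose (j+1) * (j+1) = n.choose (j.succ) * (j.succ) from rfl]
        exact hid.symm
      have hpe : p ^ e ∣ (j+1) * n.choose (j+1) := dvd_trans (Nat.ordProj_dvd n p) hd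
      have hne0 : (j+1) * n.choose (j+1) ≠ 0 := Nat.mul_ne_zero (by omega) hCne
      rw [hp.pow_dvd_iff_le_factorization hne0] at hpe
      rw [Nat.factorization_mul (by omega) hCne] at hpe
      simpa using hpe
    have h2 : t ≤ (j.descFactorial k).factorization p + m := by
      rcases le_or_gt t m with h | h
      · omega
      · have hjfac : Nat.factorial (j - k) * j.descFactorial k = Nat.factorial j :=
          Nat.factorial_mul_descFactorial (by omega)
        have hvj : t ≤ (Nat.factorial j).factorization p + 1 := by
          have hptJ : p ^ t ≤ j + 1 := Nat.le_of_dvd (by omega) (Nat.ordProj_dvd _ _)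
          have hlt : p * (t - 1) < p ^ t := by
            have hh := Nat.lt_pow_self (n := t-1) hp.one_lt
            have h2p := hp.two_le
            calc p * (t-1) < p * p^(t-1) := by
                  apply Nat.mul_lt_mul_of_le_of_lt (le_refl p) hh (by omega)
              _ = p ^ t := by
                  conv_rhs => rw [show t = (t-1)+1 by omega]
                  ring
          have hdvd : p ^ (t-1) ∣ Nat.factorial j := pow_dvd_factorial_of_mul_le hp.pos (by omega)
          rw [hp.pow_dvd_iff_le_factorization (Nat.factorial_ne_zero j)] at hdvd
          omega
        have hvm : (Nat.factorial m).factorization p + 1 ≤ m :=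
          factorization_factorial_add_one_le hp m hm1
        have hsum : (Nat.factorial m).factorization p + (j.descFactorial k).factorization p
            = (Nat.factorial j).factorization p := by
          rw [← hm] at hjfac
          rw [← hjfac, Nat.factorization_mul (Nat.factorial_ne_zero m) hdne]
          simp
        omega
    have h3 : p ^ e ∣ n.choose (j+1) * j.descFactorial k * p ^ m := by
      rw [hp.pow_dvd_iff_le_factorization (Nat.mul_ne_zero (Nat.mul_ne_zero hCne hdne) (pow_ne_zero m hp.pos.ne'))]
      rw [Nat.factorization_mul (Nat.mul_ne_zero hCne hdne) (pow_ne_zero m hp.pos.ne')]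
      rw [Nat.factorization_mul hCne hdne, hp.factorization_pow]
      simp only [Finsupp.coe_add, Pi.add_apply, Finsupp.single_eq_same]
      omega
    have h4 : (p:ℤ)^e ∣ (n.choose (j+1) : ℤ) * (j.descFactorial k : ℤ) * (p:ℤ) ^ m := by
      exact_mod_cast Int.natCast_dvd_natCast.mpr h3
    have h5 : (n.choose (j+1) : ℤ) * (j.descFactorial k : ℤ) * β ^ (j - k)
        = ((n.choose (j+1) : ℤ) * (j.descFactorial k : ℤ) * (p:ℤ) ^ m) * γ ^ m := by
      rw [← hm, hγ, mul_pow]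
      ring
    rw [h5]
    exact Dvd.dvd.mul_right h4 _

lemma term_k {p k n : ℕ} (hp : p.Prime) (hn : 1 ≤ n) (hpn : p ∣ n)
    (hdvd : p ^ ((k+1).factorization p) ∣ Nat.factorial k) (hkn : k + 1 ≤ n) :
    p ^ (n.factorization p) ∣ n.choose (k+1) * Nat.factorial k := by
  have hCne : n.choose (k+1) ≠ 0 := (Nat.choose_pos hkn).ne'
  have h1 : n.factorization p ≤ (k+1).factorization p + (n.choose (k+1)).factorization p := by
    have hid := Nat.add_one_mul_choose_eq (n-1) k
    rw [show n - 1 + 1 = n by omega] at hid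
    have hd : (n : ℕ) ∣ (k+1) * n.choose (k+1) := by
      refine ⟨Nat.choose (n-1) k, ?_⟩
      rw [Nat.mul_comm (k+1) (n.choose (k+1))]
      rw [show n.choose (k+1) * (k+1) = n.choose (k.succ) * (k.succ) from rfl]
      exact hid.symm
    have hpe : p ^ (n.factorization p) ∣ (k+1) * n.choose (k+1) :=
      dvd_trans (Nat.ordProj_dvd n p) hd
    have hne0 : (k+1) * n.choose (k+1) ≠ 0 := Nat.mul_ne_zero (by omega) hCne
    rw [hp.pow_dvd_iff_le_factorization hne0, Nat.factorization_mul (by omega) hCne] at hpe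
    simpa using hpe
  have h2 : (k+1).factorization p ≤ (Nat.factorial k).factorization p := by
    rw [← hp.pow_dvd_iff_le_factorization (Nat.factorial_ne_zero k)]
    exact hdvd
  rw [hp.pow_dvd_iff_le_factorization (Nat.mul_ne_zero hCne (Nat.factorial_ne_zero k)),
    Nat.factorization_mul hCne (Nat.factorial_ne_zero k)]
  simp only [Finsupp.coe_add, Pi.add_apply]
  omega

lemma key (k n : ℕ) (hn : 1 ≤ n) (α : ℤ) (hα : (n:ℤ) ∣ α ^ n - 1)
    (h : (k + 1 ≠ 4 ∧ ¬ Nat.Prime (k + 1)) ∨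
         (k + 1 = 4 ∧ ¬ (4 ∣ n)) ∨
         (Nat.Prime (k + 1) ∧ (¬ ((k + 1) ∣ n) ∨ ¬ (α ≡ 1 [ZMOD ((k : ℤ) + 1)]))))
    (p : ℕ) (hp : p.Prime) :
    (p:ℤ) ^ (n.factorization p)
      ∣ ∑ i ∈ Finset.Ico k n, (i.descFactorial k : ℤ) * α ^ (i - k) := by
  by_cases hpn : p ∣ n
  swap
  · rw [Nat.factorization_eq_zero_of_not_dvd hpn]
    simp
  by_cases hα1 : (p:ℤ) ∣ α - 1
  · -- closed form route
    have hsum : ∑ i ∈ Finset.Ico k n, (i.descFactorial k : ℤ) * α ^ (i - k)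
        = ∑ i ∈ range n, (i.descFactorial k : ℤ) * α ^ (i - k) := by
      rw [Finset.range_eq_Ico]
      apply Finset.sum_subset (Finset.Ico_subset_Ico (Nat.zero_le k) (le_refl n))
      intro x _ hx2
      simp only [Finset.mem_Ico] at *
      rw [Nat.descFactorial_eq_zero_iff_lt.mpr (by omega)]
      push_cast
      ring
    have hre : ∀ i : ℕ, (i.descFactorial k : ℤ) * α ^ (i - k)
        = (i.descFactorial k : ℤ) * (1 + (α - 1)) ^ (i - k) := by
      intro i
      congr 2
      ring
    rw [hsum, Finset.sum_congr rfl (fun i _ => hre i), closed_form k (α - 1) n]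
    apply key2 k n p hp hn (α - 1) hα1
    intro hkn
    rcases h with ⟨h4, hnp⟩ | ⟨h4, hn4⟩ | ⟨hq, hcase⟩
    · exact term_k hp hn hpn (pow_factorization_succ_dvd_factorial hp h4 hnp) hkn
    · by_cases hp2 : p = 2
      · subst hp2
        have hk3 : k = 3 := by omega
        have hn0 : n ≠ 0 := by omega
        have hge1 : 1 ≤ n.factorization 2 := by
          rw [← hp.pow_dvd_iff_le_factorization hn0, pow_one]
          exact hpn
        have hlt2 : n.factorization 2 < 2 := by
          by_contra hh
          push_neg at hh
          exact hn4 (dvd_trans (pow_dvd_pow 2 hh) (Nat.ordProj_dvd n 2))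
        have he1 : n.factorization 2 = 1 := by omega
        rw [he1, pow_one, hk3]
        exact Dvd.dvd.mul_left (by decide : (2:ℕ) ∣ Nat.factorial 3) _
      · have hnd : ¬ p ∣ k + 1 := by
          rw [h4]
          intro hd
          have := (Nat.prime_dvd_prime_iff_eq hp Nat.prime_two).mp
            (hp.dvd_of_dvd_pow (n := 2) (by simpa [show (4:ℕ) = 2^2 by norm_num] using hd))
          exact hp2 this
        have hz : (k+1).factorization p = 0 := Nat.factorization_eq_zero_of_not_dvd hnd
        exact term_k hp hn hpn (by rw [hz]; simpa using one_dvd _) hkn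
    · by_cases hpq : p = k + 1
      · exfalso
        rcases hcase with hc | hc
        · exact hc (hpq ▸ hpn)
        · apply hc
          have hd1 : ((k:ℤ) + 1) ∣ α - 1 := by
            rw [show ((k:ℤ) + 1) = ((k+1 : ℕ) : ℤ) by push_cast; ring, ← hpq]
            exact hα1
          have hd2 : ((k:ℤ) + 1) ∣ 1 - α := by
            rw [show (1 - α) = -(α - 1) by ring]
            exact hd1.neg_right
          exact Int.modEq_iff_dvd.mpr hd2
      · have hnd : ¬ p ∣ k + 1 := by
          intro hd
          rcases (Nat.Prime.eq_one_or_self_of_dvd hq p hd) with h1 | h1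
          · exact hp.one_lt.ne' h1
          · exact hpq h1
        have hz : (k+1).factorization p = 0 := Nat.factorization_eq_zero_of_not_dvd hnd
        exact term_k hp hn hpn (by rw [hz]; simpa using one_dvd _) hkn
  · -- coprime route
    have hch := chain n hn α hα k
    have hpe : (p:ℤ) ^ (n.factorization p)
        ∣ (α - 1) ^ (k+1) * ∑ i ∈ Finset.Ico k n, (i.descFactorial k : ℤ) * α ^ (i - k) := by
      refine dvd_trans ?_ hch
      have := Nat.ordProj_dvd n p
      exact_mod_cast Int.natCast_dvd_natCast.mpr this
    have hcop : IsCoprime ((p:ℤ) ^ (n.factorization p)) ((α - 1) ^ (k+1)) :=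
      (((Nat.prime_iff_prime_int.mp hp).coprime_iff_not_dvd).mpr hα1).pow
    exact hcop.dvd_of_dvd_mul_left hpe

/-- The "if" direction of Theorem 1: for `k ≥ 0`, `n ≥ 1` and `α ∈ ℤ` with
`α ^ n ≡ 1 (mod n)`, if (a) `k+1` is neither `4` nor a prime, or
(b) `k+1 = 4` and `4 ∤ n`, or (c) `k+1` is a prime `q` and either `q ∤ n` or
`α ≢ 1 (mod q)`, then `∑_{i=k}^{n-1} i^(k̲) · α^(i-k) ≡ 0 (mod n)`. -/
theorem sum_descFactorial_mul_pow_modEq_zero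
    (k n : ℕ) (hn : 1 ≤ n) (α : ℤ) (hα : α ^ n ≡ 1 [ZMOD (n : ℤ)])
    (h : (k + 1 ≠ 4 ∧ ¬ Nat.Prime (k + 1)) ∨
         (k + 1 = 4 ∧ ¬ (4 ∣ n)) ∨
         (Nat.Prime (k + 1) ∧ (¬ ((k + 1) ∣ n) ∨ ¬ (α ≡ 1 [ZMOD ((k : ℤ) + 1)])))) :
    (∑ i ∈ Finset.Ico k n, (i.descFactorial k : ℤ) * α ^ (i - k)) ≡ 0 [ZMOD (n : ℤ)] := by
  set S := ∑ i ∈ Finset.Ico k n, (i.descFactorial k : ℤ) * α ^ (i - k) with hS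
  have hα' : (n:ℤ) ∣ α ^ n - 1 := by
    have h1 : (n:ℤ) ∣ 1 - α ^ n := Int.ModEq.dvd hα
    rw [show α ^ n - 1 = -(1 - α ^ n) by ring]
    exact h1.neg_right
  have hdvd : (n:ℤ) ∣ S := by
    rcases eq_or_ne S 0 with h0 | h0
    · simp [h0]
    · rw [Int.natCast_dvd, ← Nat.factorization_le_iff_dvd (by omega) (Int.natAbs_ne_zero.mpr h0)]
      rw [Finsupp.le_def]
      intro p
      by_cases hp : p.Prime
      · have hkey := key k n hn α hα' h p hp
        have : ((p ^ (n.factorization p) : ℕ) : ℤ) ∣ S := by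
          push_cast
          exact hkey
        rw [Int.natCast_dvd] at this
        exact (hp.pow_dvd_iff_le_factorization (Int.natAbs_ne_zero.mpr h0)).mp this
      · rw [Nat.factorization_eq_zero_of_not_prime n hp]
        exact Nat.zero_le _
  exact Int.modEq_zero_iff_dvd.mpr hdvd
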